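/- With N, G as in the Proposition, N satisfies N = I + (A_0 + A_1 G) N, including the case where both sides diverge. -/
import Mathlib


open scoped ENNReal
open Classical

abbrev Mx := ℕ → ℕ → ℝ≥0∞

noncomputable def mprod (A B : Mx) : Mx := fun i j => ∑' k, A i k * B k j

def isPM1 (L : List ℤ) : Prop := ∀ x ∈ L, x = -1 ∨ x = 0 ∨ x = 1

/-- `I_{D,m,n}` with `n = L.length`. -/
def ID (m : ℕ) (L : List ℤ) : Prop :=
  isPM1 L ∧ (∀ k, 1 ≤ k → k ≤ L.length - 1 → -(m : ℤ) + 1 ≤ (L.take k).sum) ∧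
    L.sum = -(m : ℤ)

/-- `I_n`: partial sums nonnegative and total sum `0`. -/
def IFlat (L : List ℤ) : Prop :=
  isPM1 L ∧ (∀ k, 1 ≤ k → k ≤ L.length - 1 → 0 ≤ (L.take k).sum) ∧ L.sum = 0

/-- `I_{U,1,n}`: partial sums `≥ 1` and total sum `1`. -/
def IU (L : List ℤ) : Prop :=
  isPM1 L ∧ (∀ k, 1 ≤ k → k ≤ L.length - 1 → 1 ≤ (L.take k).sum) ∧ L.sum = 1

/-- The matrix associated with an index in `{-1,0,1}`. -/
noncomputable def pick (Am1 A0 A1 : Mx) (x : ℤ) : Mx :=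
  if x = -1 then Am1 else if x = 0 then A0 else A1

/-- Product `A_{i₁} A_{i₂} ⋯ A_{i_n}` along an index sequence. -/
noncomputable def seqProd (Am1 A0 A1 : Mx) : List ℤ → Mx
  | [] => fun i j => if i = j then 1 else 0
  | x :: L => mprod (pick Am1 A0 A1 x) (seqProd Am1 A0 A1 L)

lemma tsum_sumtype {α β : Type} (f : α ⊕ β → ℝ≥0∞) :
    ∑' x, f x = (∑' a, f (Sum.inl a)) + ∑' b, f (Sum.inr b) := by
  rw [← (Equiv.sumEquivSigmaBool α β).symm.tsum_eq f, ENNReal.tsum_sigma', tsum_fintype]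
  simp [Equiv.sumEquivSigmaBool, add_comm]

lemma mprod_assoc (A B C : Mx) : mprod (mprod A B) C = mprod A (mprod B C) := by
  funext i j
  unfold mprod
  calc ∑' k, (∑' a, A i a * B a k) * C k j
      = ∑' k, ∑' a, A i a * B a k * C k j := by
        exact tsum_congr fun k => (ENNReal.tsum_mul_right).symm
    _ = ∑' a, ∑' k, A i a * (B a k * C k j) := by
        rw [ENNReal.tsum_comm]; exact tsum_congr fun a => tsum_congr fun k => mul_assoc _ _ _
    _ = ∑' a, A i a * ∑' k, B a k * C k j := tsum_congr fun a => ENNReal.tsum_mul_left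

lemma mprod_one (B : Mx) : mprod (fun i j => if i = j then 1 else 0) B = B := by
  funext i j
  unfold mprod
  rw [tsum_eq_single i (fun k hk => by simp [Ne.symm hk])]
  simp

lemma mprod_tsum_right {ι : Type} (A : Mx) (F : ι → Mx) (i j : ℕ) :
    mprod A (fun a b => ∑' x, F x a b) i j = ∑' x, mprod A (F x) i j := by
  unfold mprod
  calc ∑' k, A i k * ∑' x, F x k j = ∑' k, ∑' x, A i k * F x k j := by
        exact tsum_congr fun k => (ENNReal.tsum_mul_left).symm
    _ = ∑' x, ∑' k, A i k * F x k j := ENNReal.tsum_comm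

lemma mprod_tsum_left {ι : Type} (F : ι → Mx) (B : Mx) (i j : ℕ) :
    mprod (fun a b => ∑' x, F x a b) B i j = ∑' x, mprod (F x) B i j := by
  unfold mprod
  calc ∑' k, (∑' x, F x i k) * B k j = ∑' k, ∑' x, F x i k * B k j := by
        exact tsum_congr fun k => (ENNReal.tsum_mul_right).symm
    _ = ∑' x, ∑' k, F x i k * B k j := ENNReal.tsum_comm

lemma mprod_add_left (P Q B : Mx) (i j : ℕ) :
    mprod (fun a b => P a b + Q a b) B i j = mprod P B i j + mprod Q B i j := by
  unfold mprod
  rw [← ENNReal.tsum_add]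
  exact tsum_congr fun k => add_mul _ _ _

lemma iflat_iff (L : List ℤ) :
    IFlat L ↔ isPM1 L ∧ (∀ k, 0 ≤ (L.take k).sum) ∧ L.sum = 0 := by
  constructor
  · rintro ⟨h1, h2, h3⟩
    refine ⟨h1, fun k => ?_, h3⟩
    rcases Nat.eq_zero_or_pos k with hk | hk
    · simp [hk]
    rcases le_or_gt L.length k with hk2 | hk2
    · rw [List.take_of_length_le hk2, h3]
    · exact h2 k hk (by omega)
  · rintro ⟨h1, h2, h3⟩
    exact ⟨h1, fun k _ _ => h2 k, h3⟩

lemma id1_iff (L : List ℤ) :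
    ID 1 L ↔ isPM1 L ∧ (∀ k, k < L.length → 0 ≤ (L.take k).sum) ∧ L.sum = -1 := by
  unfold ID
  constructor
  · rintro ⟨h1, h2, h3⟩
    refine ⟨h1, fun k hk => ?_, by simpa using h3⟩
    rcases Nat.eq_zero_or_pos k with hk0 | hk0
    · simp [hk0]
    · have := h2 k hk0 (by omega)
      push_cast at this
      linarith
  · rintro ⟨h1, h2, h3⟩
    refine ⟨h1, fun k hk1 hk2 => ?_, by simpa using h3⟩
    have := h2 k (by omega)
    push_cast
    linarith

lemma id1_take (M : List ℤ) (hM : ID 1 M) (j : ℕ) : -1 ≤ (M.take j).sum := by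
  rw [id1_iff] at hM
  rcases lt_or_ge j M.length with h | h
  · linarith [hM.2.1 j h]
  · rw [List.take_of_length_le h, hM.2.2]

lemma flat_nil : IFlat [] := by
  refine ⟨by simp [isPM1], fun k h1 h2 => ?_, rfl⟩
  simp at h2; omega

lemma flat_cons_zero (T : List ℤ) : IFlat ((0 : ℤ) :: T) ↔ IFlat T := by
  simp only [iflat_iff, isPM1, List.forall_mem_cons, List.sum_cons]
  constructor
  · rintro ⟨⟨_, h1⟩, h2, h3⟩
    refine ⟨h1, fun k => ?_, by linarith⟩
    have := h2 (k + 1)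
    rwa [List.take_succ_cons, List.sum_cons, zero_add] at this
  · rintro ⟨h1, h2, h3⟩
    refine ⟨⟨by norm_num, h1⟩, fun k => ?_, by linarith⟩
    cases k with
    | zero => simp
    | succ k => rw [List.take_succ_cons, List.sum_cons, zero_add]; exact h2 k

lemma take_append_sum (M L : List ℤ) (n : ℕ) :
    ((M ++ L).take (M.length + n)).sum = M.sum + (L.take n).sum := by
  rw [List.take_add, List.take_left, List.drop_left, List.sum_append]

lemma flat_one_append (M L : List ℤ) (hM : ID 1 M) (hL : IFlat L) :
    IFlat ((1 : ℤ) :: (M ++ L)) := by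
  rw [iflat_iff] at hL ⊢
  have hM' := (id1_iff M).mp hM
  refine ⟨?_, ?_, ?_⟩
  · intro x hx
    rcases List.mem_cons.mp hx with h | h
    · subst h; norm_num
    rcases List.mem_append.mp h with h | h
    exacts [hM'.1 x h, hL.1 x h]
  · intro k
    cases k with
    | zero => simp
    | succ j =>
      rw [List.take_succ_cons, List.sum_cons]
      have : -1 ≤ ((M ++ L).take j).sum := by
        rcases le_or_gt j M.length with hj | hj
        · rw [List.take_append_of_le_length hj]
          exact id1_take M hM j
        · have hj' : j = M.length + (j - M.length) := by omega
          rw [hj', take_append_sum, hM'.2.2]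
          linarith [hL.2.1 (j - M.length)]
      linarith
  · rw [List.sum_cons, List.sum_append, hM'.2.2, hL.2.2]; ring

lemma flat_head (x : ℤ) (T : List ℤ) (h : IFlat (x :: T)) : x = 0 ∨ x = 1 := by
  rw [iflat_iff] at h
  have h1 := h.2.1 1
  simp [List.take_succ_cons] at h1
  rcases h.1 x (by simp) with h | h | h <;> omega

lemma flat_one_tail (T : List ℤ) (h : IFlat ((1:ℤ) :: T)) :
    isPM1 T ∧ (∀ k, -1 ≤ (T.take k).sum) ∧ T.sum = -1 := by
  rw [iflat_iff] at h
  refine ⟨fun x hx => h.1 x (by simp [hx]), fun k => ?_, ?_⟩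
  · have := h.2.1 (k + 1)
    rw [List.take_succ_cons, List.sum_cons] at this
    linarith
  · have := h.2.2
    rw [List.sum_cons] at this
    linarith

lemma fp_exists (T : List ℤ) (h1 : isPM1 T) (h2 : ∀ k, (-1:ℤ) ≤ (T.take k).sum)
    (h3 : T.sum = -1) : ∃ M L, ID 1 M ∧ IFlat L ∧ T = M ++ L := by
  have hex : ∃ k, (T.take k).sum = -1 :=
    ⟨T.length, by rw [List.take_of_length_le le_rfl]; exact h3⟩
  set k0 := Nat.find hex with hk0
  refine ⟨T.take k0, T.drop k0, ?_, ?_, (List.take_append_drop k0 T).symm⟩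
  · rw [id1_iff]
    refine ⟨fun x hx => h1 x (List.mem_of_mem_take hx), fun j hj => ?_, Nat.find_spec hex⟩
    have hjk : j < k0 := lt_of_lt_of_le hj (by simp [List.length_take])
    rw [List.take_take, min_eq_left hjk.le]
    have hne := Nat.find_min hex hjk
    have := h2 j
    omega
  · rw [iflat_iff]
    have hsum : (T.take k0).sum = -1 := Nat.find_spec hex
    refine ⟨fun x hx => h1 x (List.mem_of_mem_drop hx), fun j => ?_, ?_⟩
    · have := h2 (k0 + j)
      rw [List.take_add, List.sum_append, hsum] at this
      linarith
    · have := List.sum_take_add_sum_drop T k0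
      rw [hsum] at this
      linarith
lemma fp_le {M1 L1 M2 L2 : List ℤ} (h2 : ID 1 M2) (h : M1 ++ L1 = M2 ++ L2)
    (hM1 : M1.sum = -1) (hle : M1.length ≤ M2.length) : M1 = M2 := by
  have hpre : M2.take M1.length = M1 := by
    have h' := congrArg (List.take M1.length) h
    rwa [List.take_left, List.take_append_of_le_length hle, eq_comm] at h'
  rcases eq_or_lt_of_le hle with heq | hlt
  · rw [← hpre, heq, List.take_length]
  · exfalso
    have := ((id1_iff M2).mp h2).2.1 M1.length hlt
    rw [hpre, hM1] at this
    linarith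

lemma fp_eq {M1 L1 M2 L2 : List ℤ} (h1 : ID 1 M1) (h2 : ID 1 M2)
    (h : M1 ++ L1 = M2 ++ L2) : M1 = M2 := by
  rcases le_total M1.length M2.length with hle | hle
  · exact fp_le h2 h ((id1_iff M1).mp h1).2.2 hle
  · exact (fp_le h1 h.symm ((id1_iff M2).mp h2).2.2 hle).symm

/-- Decoding of flat lists: empty, or `0 :: flat`, or `1 :: (down ++ flat)`. -/
def decode : Unit ⊕ ({L : List ℤ // IFlat L} ⊕ ({M : List ℤ // ID 1 M} × {L : List ℤ // IFlat L})) →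
    {L : List ℤ // IFlat L}
  | .inl _ => ⟨[], flat_nil⟩
  | .inr (.inl ⟨L, h⟩) => ⟨0 :: L, (flat_cons_zero L).mpr h⟩
  | .inr (.inr (⟨M, hM⟩, ⟨L, hL⟩)) => ⟨1 :: (M ++ L), flat_one_append M L hM hL⟩

lemma decode_injective : Function.Injective decode := by
  intro a b h
  have hv := congrArg Subtype.val h
  rcases a with ⟨⟩ | (⟨L1, hL1⟩ | ⟨⟨M1, hM1⟩, ⟨L1, hL1⟩⟩) <;>
    rcases b with ⟨⟩ | (⟨L2, hL2⟩ | ⟨⟨M2, hM2⟩, ⟨L2, hL2⟩⟩) <;>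
    simp only [decode] at hv
  · rfl
  · exact absurd hv (by simp)
  · exact absurd hv (by simp)
  · exact absurd hv (by simp)
  · injection hv with h1 h2
    subst h2
    rfl
  · exfalso
    injection hv with h1 h2
    norm_num at h1
  · exact absurd hv (by simp)
  · exfalso
    injection hv with h1 h2
    norm_num at h1
  · injection hv with h1 h2
    obtain rfl := fp_eq hM1 hM2 h2
    obtain rfl := List.append_cancel_left h2
    rfl

lemma decode_bijective : Function.Bijective decode := by
  refine ⟨decode_injective, ?_⟩
  · rintro ⟨L, hL⟩
    match L with
    | [] => exact ⟨.inl (), rfl⟩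
    | x :: T =>
      rcases flat_head x T hL with rfl | rfl
      · exact ⟨.inr (.inl ⟨T, (flat_cons_zero T).mp hL⟩), rfl⟩
      · obtain ⟨hT1, hT2, hT3⟩ := flat_one_tail T hL
        obtain ⟨M, L', hM, hL', hTe⟩ := fp_exists T hT1 hT2 hT3
        exact ⟨.inr (.inr (⟨M, hM⟩, ⟨L', hL'⟩)), by simp [decode, hTe]⟩

lemma decode_inr_inl (x : {L : List ℤ // IFlat L}) :
    (decode (Sum.inr (Sum.inl x))).1 = 0 :: x.1 := by
  rcases x with ⟨L, h⟩; rfl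

lemma decode_inr_inr (p : {M : List ℤ // ID 1 M} × {L : List ℤ // IFlat L}) :
    (decode (Sum.inr (Sum.inr p))).1 = 1 :: (p.1.1 ++ p.2.1) := by
  rcases p with ⟨⟨M, hM⟩, ⟨L, hL⟩⟩; rfl

lemma seqProd_append (Am1 A0 A1 : Mx) (M L : List ℤ) :
    seqProd Am1 A0 A1 (M ++ L) = mprod (seqProd Am1 A0 A1 M) (seqProd Am1 A0 A1 L) := by
  induction M with
  | nil => rw [List.nil_append]; exact (mprod_one _).symm
  | cons x M ih =>
    rw [List.cons_append]
    show mprod _ (seqProd Am1 A0 A1 (M ++ L)) = _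
    rw [ih, ← mprod_assoc]
    rfl

/-- `N` satisfies `N = I + (A₀ + A₁ G) N`, including the case where both sides
diverge (all arithmetic in `[0,∞]`). -/
theorem stmt7 (Am1 A0 A1 : Mx)
    (hfin : ∀ L : List ℤ, isPM1 L → ∀ i j, seqProd Am1 A0 A1 L i j ≠ ⊤)
    (N G : Mx)
    (hN : N = fun i j => ∑' L : {L : List ℤ // IFlat L}, seqProd Am1 A0 A1 L.1 i j)
    (hG : G = fun i j => ∑' L : {L : List ℤ // ID 1 L}, seqProd Am1 A0 A1 L.1 i j) :
    ∀ i j, N i j = (if i = j then (1 : ℝ≥0∞) else 0) +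
      mprod (fun a b => A0 a b + mprod A1 G a b) N i j := by
  intro i j
  subst hN hG
  have hS0 : ∀ T : List ℤ, seqProd Am1 A0 A1 ((0:ℤ) :: T) = mprod A0 (seqProd Am1 A0 A1 T) := by
    intro T; norm_num [seqProd, pick]
  have hS1 : ∀ T : List ℤ, seqProd Am1 A0 A1 ((1:ℤ) :: T) = mprod A1 (seqProd Am1 A0 A1 T) := by
    intro T; norm_num [seqProd, pick]
  have hB : (∑' L : {L : List ℤ // IFlat L}, seqProd Am1 A0 A1 ((0:ℤ) :: L.1) i j)
      = mprod A0 (fun a b => ∑' L : {L : List ℤ // IFlat L}, seqProd Am1 A0 A1 L.1 a b) i j := by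
    rw [mprod_tsum_right]
    exact tsum_congr fun L => by rw [hS0]
  have hC : (∑' p : {M : List ℤ // ID 1 M} × {L : List ℤ // IFlat L},
        seqProd Am1 A0 A1 ((1:ℤ) :: (p.1.1 ++ p.2.1)) i j)
      = mprod (mprod A1 (fun a b => ∑' M : {L : List ℤ // ID 1 L}, seqProd Am1 A0 A1 M.1 a b))
          (fun a b => ∑' L : {L : List ℤ // IFlat L}, seqProd Am1 A0 A1 L.1 a b) i j := by
    calc (∑' p : {M : List ℤ // ID 1 M} × {L : List ℤ // IFlat L},
          seqProd Am1 A0 A1 ((1:ℤ) :: (p.1.1 ++ p.2.1)) i j)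
        = ∑' (M : {M : List ℤ // ID 1 M}) (L : {L : List ℤ // IFlat L}),
            mprod (mprod A1 (seqProd Am1 A0 A1 M.1)) (seqProd Am1 A0 A1 L.1) i j := by
          rw [ENNReal.tsum_prod']
          exact tsum_congr fun M => tsum_congr fun L => by
            rw [hS1, seqProd_append, ← mprod_assoc]
      _ = ∑' (M : {M : List ℤ // ID 1 M}),
            mprod (mprod A1 (seqProd Am1 A0 A1 M.1))
              (fun a b => ∑' L : {L : List ℤ // IFlat L}, seqProd Am1 A0 A1 L.1 a b) i j :=
          tsum_congr fun M => (mprod_tsum_right _ _ i j).symm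
      _ = mprod (fun a b => ∑' M : {M : List ℤ // ID 1 M}, mprod A1 (seqProd Am1 A0 A1 M.1) a b)
            (fun a b => ∑' L : {L : List ℤ // IFlat L}, seqProd Am1 A0 A1 L.1 a b) i j :=
          (mprod_tsum_left _ _ i j).symm
      _ = _ := by
          have he : (fun a b => ∑' M : {M : List ℤ // ID 1 M},
                mprod A1 (seqProd Am1 A0 A1 M.1) a b)
              = mprod A1 (fun a b => ∑' M : {L : List ℤ // ID 1 L},
                  seqProd Am1 A0 A1 M.1 a b) := by
            funext a b
            exact (mprod_tsum_right A1 _ a b).symm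
          rw [he]
  show (∑' L : {L : List ℤ // IFlat L}, seqProd Am1 A0 A1 L.1 i j) = _
  calc (∑' L : {L : List ℤ // IFlat L}, seqProd Am1 A0 A1 L.1 i j)
      = ∑' x, seqProd Am1 A0 A1 ((decode x)).1 i j :=
        ((Equiv.ofBijective decode decode_bijective).tsum_eq
          (fun L : {L : List ℤ // IFlat L} => seqProd Am1 A0 A1 L.1 i j)).symm
    _ = seqProd Am1 A0 A1 [] i j
        + ((∑' L : {L : List ℤ // IFlat L}, seqProd Am1 A0 A1 ((0:ℤ) :: L.1) i j)
          + ∑' p : {M : List ℤ // ID 1 M} × {L : List ℤ // IFlat L},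
              seqProd Am1 A0 A1 ((1:ℤ) :: (p.1.1 ++ p.2.1)) i j) := by
        rw [tsum_sumtype, tsum_sumtype]
        refine congrArg₂ (· + ·) ?_ (congrArg₂ (· + ·) ?_ ?_)
        · simp [tsum_fintype, decode]
        · exact tsum_congr fun L => by rw [decode_inr_inl]
        · exact tsum_congr fun p => by rw [decode_inr_inr]
    _ = (if i = j then (1 : ℝ≥0∞) else 0) +
        mprod (fun a b => A0 a b +
          mprod A1 (fun i j => ∑' L : {L : List ℤ // ID 1 L}, seqProd Am1 A0 A1 L.1 i j) a b)
          (fun i j => ∑' L : {L : List ℤ // IFlat L}, seqProd Am1 A0 A1 L.1 i j) i j := by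
        rw [hB, hC, mprod_add_left]
        rfl
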